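/- Consider the SGD recursion θ_k − θ* = (I − αX_kX_kᵀ)(θ_{k−1} − θ*) − αε_k with i.i.d. data, where ‖X_k‖ ≤ c a.s., Φ = E[X_1X_1ᵀ] has λ_min(Φ) = a > 0, the noise ε_k is i.i.d., centered, independent of the past, bounded by ‖ε‖_∞, and α ∈ (0, 1/c²]. Then E[‖θ_k − θ*‖²]^{1/2} ≤ exp(−aαk/2)‖θ_0 − θ*‖ + ‖ε‖_∞ √(α/a). -/

import Mathlib

open MeasureTheory Matrix ProbabilityTheory

noncomputable def vnorm {d : ℕ} (v : Fin d → ℝ) : ℝ := Real.sqrt (∑ i, v i ^ 2)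

namespace SGD13
variable {d : ℕ}

lemma vnorm_nonneg (v : Fin d → ℝ) : 0 ≤ vnorm v := Real.sqrt_nonneg _

lemma vnorm_sq (v : Fin d → ℝ) : vnorm v ^ 2 = v ⬝ᵥ v := by
  rw [vnorm, Real.sq_sqrt (Finset.sum_nonneg fun i _ => sq_nonneg _)]
  simp [dotProduct, sq]

lemma abs_dot_le (v w : Fin d → ℝ) : |v ⬝ᵥ w| ≤ vnorm v * vnorm w := by
  have h := Finset.sum_mul_sq_le_sq_mul_sq Finset.univ v w
  have h1 : |v ⬝ᵥ w| = Real.sqrt ((v ⬝ᵥ w)^2) := (Real.sqrt_sq_eq_abs _).symm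
  rw [h1]
  have h2 : vnorm v * vnorm w = Real.sqrt ((∑ i, v i ^2) * (∑ i, w i ^2)) := by
    rw [vnorm, vnorm, Real.sqrt_mul (Finset.sum_nonneg fun i _ => sq_nonneg _)]
  rw [h2]
  apply Real.sqrt_le_sqrt
  simpa [dotProduct] using h

lemma abs_coord_le (v : Fin d → ℝ) (i : Fin d) : |v i| ≤ vnorm v := by
  rw [← Real.sqrt_sq_eq_abs, vnorm]
  apply Real.sqrt_le_sqrt
  exact Finset.single_le_sum (f := fun j => v j ^2) (fun j _ => sq_nonneg _) (Finset.mem_univ i)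

lemma vnorm_smul (t : ℝ) (v : Fin d → ℝ) : vnorm (t • v) = |t| * vnorm v := by
  rw [vnorm, vnorm]
  have : ∑ i, (t • v) i ^2 = t^2 * ∑ i, v i ^2 := by
    simp [Finset.mul_sum, mul_pow]
  rw [this, Real.sqrt_mul (sq_nonneg _), Real.sqrt_sq_eq_abs]

lemma vnorm_add_le (v w : Fin d → ℝ) : vnorm (v + w) ≤ vnorm v + vnorm w := by
  have key : vnorm (v+w) ^2 ≤ (vnorm v + vnorm w)^2 := by
    rw [vnorm_sq]
    have hd : (v+w) ⬝ᵥ (v+w) = v ⬝ᵥ v + 2 * (v ⬝ᵥ w) + w ⬝ᵥ w := by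
      simp [add_dotProduct, dotProduct_add, dotProduct_comm w v]; ring
    rw [hd, ← vnorm_sq, ← vnorm_sq]
    have h := abs_dot_le v w
    nlinarith [le_abs_self (v ⬝ᵥ w)]
  calc vnorm (v+w) = Real.sqrt (vnorm (v+w)^2) := (Real.sqrt_sq (vnorm_nonneg _)).symm
    _ ≤ Real.sqrt ((vnorm v + vnorm w)^2) := Real.sqrt_le_sqrt key
    _ = vnorm v + vnorm w := Real.sqrt_sq (add_nonneg (vnorm_nonneg _) (vnorm_nonneg _))

lemma vnorm_sub_le (v w : Fin d → ℝ) : vnorm (v - w) ≤ vnorm v + vnorm w := by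
  have h := vnorm_add_le v (-w)
  have hneg : vnorm (-w) = vnorm w := by
    rw [vnorm, vnorm]; congr 1; apply Finset.sum_congr rfl; intro i _; simp
  rw [sub_eq_add_neg, ← hneg]
  exact h.trans (by rw [hneg])

lemma vnorm_sub_sq (u w : Fin d → ℝ) :
    vnorm (u - w) ^ 2 = vnorm u ^ 2 - 2 * (u ⬝ᵥ w) + vnorm w ^ 2 := by
  rw [vnorm_sq, vnorm_sq, vnorm_sq, sub_dotProduct, dotProduct_sub, dotProduct_sub,
    dotProduct_comm w u]
  ring

lemma mulVec_sub_form (x v : Fin d → ℝ) (α : ℝ) :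
    ((1 : Matrix (Fin d) (Fin d) ℝ) - α • vecMulVec x x).mulVec v
      = v - (α * (x ⬝ᵥ v)) • x := by
  rw [Matrix.sub_mulVec, Matrix.one_mulVec, Matrix.smul_mulVec]
  congr 1
  funext i
  simp [vecMulVec, Matrix.mulVec, dotProduct, Finset.mul_sum]
  rw [Finset.sum_mul]
  apply Finset.sum_congr rfl
  intro j _
  ring

/-- one-step contraction, squared, pointwise. -/
lemma contract_sq {x v : Fin d → ℝ} {c α : ℝ} (hx : vnorm x ≤ c) (hα : 0 ≤ α)
    (hαc : α * c ^ 2 ≤ 1) :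
    vnorm (v - (α * (x ⬝ᵥ v)) • x) ^ 2 ≤ vnorm v ^ 2 - α * (x ⬝ᵥ v) ^ 2 := by
  have hxx : x ⬝ᵥ x ≤ c ^ 2 := by
    rw [← vnorm_sq]
    have h0 : 0 ≤ vnorm x := Real.sqrt_nonneg _
    nlinarith
  have hxx0 : 0 ≤ x ⬝ᵥ x := by rw [← vnorm_sq]; positivity
  have expand : vnorm (v - (α * (x ⬝ᵥ v)) • x) ^ 2
      = vnorm v ^ 2 - 2 * α * (x ⬝ᵥ v) ^ 2 + α ^ 2 * (x ⬝ᵥ v) ^ 2 * (x ⬝ᵥ x) := by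
    rw [vnorm_sq, vnorm_sq]
    rw [sub_dotProduct, dotProduct_sub, dotProduct_sub, smul_dotProduct, dotProduct_smul,
      smul_dotProduct, dotProduct_smul, dotProduct_comm x v]
    simp [smul_eq_mul]
    ring
  rw [expand]
  have h1 : α * (x ⬝ᵥ x) ≤ 1 := le_trans (by nlinarith) hαc
  have key : α ^ 2 * (x ⬝ᵥ v) ^ 2 * (x ⬝ᵥ x) ≤ α * (x ⬝ᵥ v) ^ 2 := by
    nlinarith [mul_nonneg hα (sq_nonneg (x ⬝ᵥ v))]
  linarith

lemma contract_le {x v : Fin d → ℝ} {c α : ℝ} (hx : vnorm x ≤ c) (hα : 0 ≤ α)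
    (hαc : α * c ^ 2 ≤ 1) :
    vnorm (v - (α * (x ⬝ᵥ v)) • x) ≤ vnorm v := by
  have h := contract_sq (v := v) hx hα hαc
  have h2 : vnorm (v - (α * (x ⬝ᵥ v)) • x) ^ 2 ≤ vnorm v ^ 2 := by
    nlinarith [mul_nonneg hα (sq_nonneg (x ⬝ᵥ v))]
  calc vnorm (v - (α * (x ⬝ᵥ v)) • x)
      = Real.sqrt (vnorm (v - (α * (x ⬝ᵥ v)) • x) ^ 2) := (Real.sqrt_sq (vnorm_nonneg _)).symm
    _ ≤ Real.sqrt (vnorm v ^ 2) := Real.sqrt_le_sqrt h2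
    _ = vnorm v := Real.sqrt_sq (vnorm_nonneg _)

/-- deterministic-start part of the SGD recursion, as a function of the X-path -/
noncomputable def sgdD (α : ℝ) (v0 : Fin d → ℝ) (z : ℕ → Fin d → ℝ) : ℕ → Fin d → ℝ
  | 0 => v0
  | k+1 => sgdD α v0 z k - (α * (z (k+1) ⬝ᵥ sgdD α v0 z k)) • z (k+1)

/-- noise part of the SGD recursion, as a function of the (X, ε)-path -/
noncomputable def sgdN (α : ℝ) (z : ℕ → (Fin d → ℝ) × (Fin d → ℝ)) : ℕ → Fin d → ℝ
  | 0 => 0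
  | k+1 => (sgdN α z k - (α * ((z (k+1)).1 ⬝ᵥ sgdN α z k)) • (z (k+1)).1)
            - α • (z (k+1)).2

lemma sgdD_congr {α : ℝ} {v0 : Fin d → ℝ} {z z' : ℕ → Fin d → ℝ} (k : ℕ)
    (h : ∀ i, 1 ≤ i → i ≤ k → z i = z' i) : sgdD α v0 z k = sgdD α v0 z' k := by
  induction k with
  | zero => rfl
  | succ k ih =>
    have hz : z (k+1) = z' (k+1) := h (k+1) (Nat.succ_le_succ (Nat.zero_le _)) le_rfl
    have ih' := ih fun i h1 h2 => h i h1 (h2.trans (Nat.le_succ _))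
    simp only [sgdD, hz, ih']

lemma sgdN_congr {α : ℝ} {z z' : ℕ → (Fin d → ℝ) × (Fin d → ℝ)} (k : ℕ)
    (h : ∀ i, 1 ≤ i → i ≤ k → z i = z' i) : sgdN α z k = sgdN α z' k := by
  induction k with
  | zero => rfl
  | succ k ih =>
    have hz : z (k+1) = z' (k+1) := h (k+1) (Nat.succ_le_succ (Nat.zero_le _)) le_rfl
    have ih' := ih fun i h1 h2 => h i h1 (h2.trans (Nat.le_succ _))
    simp only [sgdN, hz, ih']

lemma measurable_dot {X : Type*} [MeasurableSpace X] {f g : X → Fin d → ℝ}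
    (hf : Measurable f) (hg : Measurable g) : Measurable fun x => f x ⬝ᵥ g x := by
  simp only [dotProduct]
  exact Finset.measurable_sum _ fun i _ => ((hf.eval (a := i))).mul (hg.eval (a := i))

lemma measurable_vnorm {X : Type*} [MeasurableSpace X] {f : X → Fin d → ℝ}
    (hf : Measurable f) : Measurable fun x => vnorm (f x) :=
  Measurable.comp Real.continuous_sqrt.measurable
    (Finset.measurable_sum _ fun i _ => (hf.eval (a := i)).pow_const 2)

lemma measurable_step {X : Type*} [MeasurableSpace X] {f g : X → Fin d → ℝ} {α : ℝ}
    (hf : Measurable f) (hg : Measurable g) :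
    Measurable fun x => f x - (α * (g x ⬝ᵥ f x)) • g x := by
  apply Measurable.sub hf
  exact Measurable.smul (measurable_const.mul (measurable_dot hg hf)) hg

lemma measurable_sgdD {α : ℝ} {v0 : Fin d → ℝ} (k : ℕ) :
    Measurable fun z : ℕ → Fin d → ℝ => sgdD α v0 z k := by
  induction k with
  | zero => exact measurable_const
  | succ k ih => exact measurable_step ih (measurable_pi_apply _)

lemma measurable_sgdN {α : ℝ} (k : ℕ) :
    Measurable fun z : ℕ → (Fin d → ℝ) × (Fin d → ℝ) => sgdN α z k := by
  induction k with
  | zero => exact measurable_const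
  | succ k ih =>
    exact (measurable_step ih ((measurable_pi_apply _).fst)).sub
      ((measurable_pi_apply (k+1)).snd.const_smul α)

variable {Ω : Type*} [MeasurableSpace Ω] {μ : Measure Ω} [IsProbabilityMeasure μ]

lemma integrable_of_bdd {f : Ω → ℝ} (hf : Measurable f) {C : ℝ}
    (hb : ∀ᵐ ω ∂μ, |f ω| ≤ C) : Integrable f μ :=
  ⟨hf.aestronglyMeasurable, HasFiniteIntegral.of_bounded (C := C) (by simpa using hb)⟩

/-- Cauchy–Schwarz for integrals. -/
lemma integral_CS {f g : Ω → ℝ} (hf2 : Integrable (fun ω => f ω ^ 2) μ)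
    (hg2 : Integrable (fun ω => g ω ^ 2) μ) (hfg : Integrable (fun ω => f ω * g ω) μ) :
    ∫ ω, f ω * g ω ∂μ ≤ Real.sqrt (∫ ω, f ω ^ 2 ∂μ) * Real.sqrt (∫ ω, g ω ^ 2 ∂μ) := by
  set A := ∫ ω, f ω ^ 2 ∂μ with hA
  set B := ∫ ω, g ω ^ 2 ∂μ with hB
  set C := ∫ ω, f ω * g ω ∂μ with hC
  have hA0 : 0 ≤ A := integral_nonneg fun ω => sq_nonneg _
  have hB0 : 0 ≤ B := integral_nonneg fun ω => sq_nonneg _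
  have key : C ^ 2 ≤ A * B := by
    rcases eq_or_lt_of_le hA0 with h0 | hpos
    · have hf0 : (fun ω => f ω ^ 2) =ᵐ[μ] 0 := by
        rw [← integral_eq_zero_iff_of_nonneg_ae
          (Filter.Eventually.of_forall fun ω => sq_nonneg _) hf2]
        exact h0.symm ▸ rfl
      have hfg0 : (fun ω => f ω * g ω) =ᵐ[μ] 0 := by
        filter_upwards [hf0] with ω hω
        have : f ω = 0 := by simpa [pow_eq_zero_iff] using hω
        simp [this]
      have : C = 0 := by
        rw [hC, integral_congr_ae hfg0]
        simp
      rw [this]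
      nlinarith
    · set t := C / A with ht
      have hexp : ∀ ω, (t * f ω - g ω) ^ 2
          = t ^ 2 * f ω ^ 2 - 2 * t * (f ω * g ω) + g ω ^ 2 := by intro ω; ring
      have h0 : 0 ≤ ∫ ω, (t * f ω - g ω) ^ 2 ∂μ := integral_nonneg fun ω => sq_nonneg _
      have hval : ∫ ω, (t * f ω - g ω) ^ 2 ∂μ = t ^ 2 * A - 2 * t * C + B := by
        simp only [hexp]
        have i1 : Integrable (fun ω => t ^ 2 * f ω ^ 2) μ := hf2.const_mul _
        have i2 : Integrable (fun ω => 2 * t * (f ω * g ω)) μ := hfg.const_mul _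
        have i12 : Integrable (fun ω => t ^ 2 * f ω ^ 2 - 2 * t * (f ω * g ω)) μ := i1.sub i2
        rw [integral_add i12 hg2, integral_sub i1 i2, integral_const_mul, integral_const_mul]
      rw [hval] at h0
      have hAne : A ≠ 0 := ne_of_gt hpos
      have heq : t ^ 2 * A - 2 * t * C + B = B - C ^ 2 / A := by
        rw [ht]
        field_simp
        ring
      rw [heq] at h0
      have := (div_le_iff₀ hpos).mp (by linarith : C ^ 2 / A ≤ B)
      linarith [this]
  calc C ≤ |C| := le_abs_self _
    _ = Real.sqrt (C ^ 2) := (Real.sqrt_sq_eq_abs _).symm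
    _ ≤ Real.sqrt (A * B) := Real.sqrt_le_sqrt key
    _ = Real.sqrt A * Real.sqrt B := Real.sqrt_mul hA0 _


section Main
variable {d : ℕ} {Ω : Type*} [MeasurableSpace Ω] {μ : Measure Ω} [IsProbabilityMeasure μ]

/-- L² contraction step. -/
lemma contractE {a α c CV : ℝ} (hα : 0 ≤ α) (hαc : α * c ^ 2 ≤ 1)
    (hc : 0 ≤ c) (hCV : 0 ≤ CV)
    (Φ : Matrix (Fin d) (Fin d) ℝ)
    (hmin : ∀ u : Fin d → ℝ, a * vnorm u ^ 2 ≤ u ⬝ᵥ Φ.mulVec u)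
    {x : Ω → Fin d → ℝ} (hx : Measurable x) (hxb : ∀ᵐ ω ∂μ, vnorm (x ω) ≤ c)
    (hxmom : ∀ i j, ∫ ω, x ω i * x ω j ∂μ = Φ i j)
    {V : Ω → Fin d → ℝ} (hV : Measurable V) (hVb : ∀ᵐ ω ∂μ, vnorm (V ω) ≤ CV)
    (hind : ∀ (f g : (Fin d → ℝ) → ℝ), Measurable f → Measurable g →
      ∫ ω, f (V ω) * g (x ω) ∂μ = (∫ ω, f (V ω) ∂μ) * ∫ ω, g (x ω) ∂μ) :
    ∫ ω, vnorm (V ω - (α * (x ω ⬝ᵥ V ω)) • x ω) ^ 2 ∂μ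
      ≤ (1 - a * α) * ∫ ω, vnorm (V ω) ^ 2 ∂μ := by
  have hVc : ∀ i, ∀ᵐ ω ∂μ, |V ω i| ≤ CV := fun i => by
    filter_upwards [hVb] with ω h using (abs_coord_le _ i).trans h
  have hxc : ∀ i, ∀ᵐ ω ∂μ, |x ω i| ≤ c := fun i => by
    filter_upwards [hxb] with ω h using (abs_coord_le _ i).trans h
  have intVV : ∀ i j, Integrable (fun ω => V ω i * V ω j) μ := by
    intro i j
    apply integrable_of_bdd ((hV.eval).mul (hV.eval)) (C := CV * CV)
    filter_upwards [hVc i, hVc j] with ω h1 h2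
    simp only [Pi.mul_apply, abs_mul]
    exact mul_le_mul h1 h2 (abs_nonneg _) hCV
  have intVVxx : ∀ i j, Integrable (fun ω => (V ω i * V ω j) * (x ω i * x ω j)) μ := by
    intro i j
    apply integrable_of_bdd (((hV.eval).mul (hV.eval)).mul ((hx.eval).mul (hx.eval)))
      (C := CV * CV * (c * c))
    filter_upwards [hVc i, hVc j, hxc i, hxc j] with ω h1 h2 h3 h4
    simp only [Pi.mul_apply, abs_mul]
    exact mul_le_mul (mul_le_mul h1 h2 (abs_nonneg _) hCV)
      (mul_le_mul h3 h4 (abs_nonneg _) hc) (by positivity) (by positivity)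
  have intV2 : Integrable (fun ω => vnorm (V ω) ^ 2) μ := by
    apply integrable_of_bdd ((measurable_vnorm hV).pow_const 2) (C := CV ^ 2)
    filter_upwards [hVb] with ω h
    rw [abs_of_nonneg (by positivity)]
    exact pow_le_pow_left₀ (vnorm_nonneg _) h 2
  have intxV2 : Integrable (fun ω => (x ω ⬝ᵥ V ω) ^ 2) μ := by
    apply integrable_of_bdd ((measurable_dot hx hV).pow_const 2) (C := (c * CV) ^ 2)
    filter_upwards [hxb, hVb] with ω h1 h2
    have habs : |x ω ⬝ᵥ V ω| ≤ c * CV :=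
      (abs_dot_le _ _).trans (mul_le_mul h1 h2 (vnorm_nonneg _) hc)
    rw [abs_of_nonneg (sq_nonneg _), ← sq_abs]
    exact pow_le_pow_left₀ (abs_nonneg _) habs 2
  -- pointwise contraction
  have hpt : ∀ᵐ ω ∂μ, vnorm (V ω - (α * (x ω ⬝ᵥ V ω)) • x ω) ^ 2
      ≤ vnorm (V ω) ^ 2 - α * (x ω ⬝ᵥ V ω) ^ 2 := by
    filter_upwards [hxb] with ω h using contract_sq h hα hαc
  have intLHS : Integrable (fun ω => vnorm (V ω - (α * (x ω ⬝ᵥ V ω)) • x ω) ^ 2) μ := by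
    apply integrable_of_bdd ((measurable_vnorm (measurable_step hV hx)).pow_const 2)
      (C := CV ^ 2)
    filter_upwards [hxb, hVb] with ω h1 h2
    rw [abs_of_nonneg (by positivity)]
    exact pow_le_pow_left₀ (vnorm_nonneg _) ((contract_le h1 hα hαc).trans h2) 2
  have step1 : ∫ ω, vnorm (V ω - (α * (x ω ⬝ᵥ V ω)) • x ω) ^ 2 ∂μ
      ≤ ∫ ω, (vnorm (V ω) ^ 2 - α * (x ω ⬝ᵥ V ω) ^ 2) ∂μ :=
    integral_mono_ae intLHS (intV2.sub (intxV2.const_mul α)) hpt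
  have step2 : ∫ ω, (vnorm (V ω) ^ 2 - α * (x ω ⬝ᵥ V ω) ^ 2) ∂μ
      = ∫ ω, vnorm (V ω) ^ 2 ∂μ - α * ∫ ω, (x ω ⬝ᵥ V ω) ^ 2 ∂μ := by
    rw [integral_sub intV2 (intxV2.const_mul α), integral_const_mul]
  -- the second moment identity
  have h4 : ∫ ω, (x ω ⬝ᵥ V ω) ^ 2 ∂μ
      = ∑ i, ∑ j, (∫ ω, V ω i * V ω j ∂μ) * Φ i j := by
    have hpt2 : (fun ω => (x ω ⬝ᵥ V ω) ^ 2)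
        = fun ω => ∑ i, ∑ j, (V ω i * V ω j) * (x ω i * x ω j) := by
      funext ω
      rw [dotProduct, sq, Finset.sum_mul_sum]
      exact Finset.sum_congr rfl fun i _ => Finset.sum_congr rfl fun j _ => by ring
    rw [hpt2, integral_finset_sum _
      (fun i _ => integrable_finset_sum _ fun j _ => intVVxx i j)]
    refine Finset.sum_congr rfl fun i _ => ?_
    rw [integral_finset_sum _ (fun j _ => intVVxx i j)]
    refine Finset.sum_congr rfl fun j _ => ?_
    rw [hind (fun v => v i * v j) (fun u => u i * u j)
      ((measurable_pi_apply i).mul (measurable_pi_apply j))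
      ((measurable_pi_apply i).mul (measurable_pi_apply j)), hxmom i j]
  have hptΦ : (fun ω => V ω ⬝ᵥ Φ.mulVec (V ω))
      = fun ω => ∑ i, ∑ j, (V ω i * V ω j) * Φ i j := by
    funext ω
    rw [dotProduct]
    refine Finset.sum_congr rfl fun i _ => ?_
    rw [Matrix.mulVec, dotProduct, Finset.mul_sum]
    exact Finset.sum_congr rfl fun j _ => by ring
  have intΦV : Integrable (fun ω => V ω ⬝ᵥ Φ.mulVec (V ω)) μ := by
    have : Integrable (fun ω => ∑ i, ∑ j, (V ω i * V ω j) * Φ i j) μ :=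
      integrable_finset_sum _ fun i _ => integrable_finset_sum _ fun j _ =>
        (intVV i j).mul_const _
    exact this.congr (Filter.EventuallyEq.of_eq hptΦ.symm)
  have h5 : ∫ ω, V ω ⬝ᵥ Φ.mulVec (V ω) ∂μ
      = ∑ i, ∑ j, (∫ ω, V ω i * V ω j ∂μ) * Φ i j := by
    rw [hptΦ, integral_finset_sum _
      (fun i _ => integrable_finset_sum _ fun j _ => (intVV i j).mul_const (Φ i j))]
    refine Finset.sum_congr rfl fun i _ => ?_
    rw [integral_finset_sum _ (fun j _ => (intVV i j).mul_const (Φ i j))]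
    exact Finset.sum_congr rfl fun j _ => integral_mul_const _ _
  have h6 : a * ∫ ω, vnorm (V ω) ^ 2 ∂μ ≤ ∫ ω, V ω ⬝ᵥ Φ.mulVec (V ω) ∂μ := by
    rw [← integral_const_mul]
    exact integral_mono_ae (intV2.const_mul a) intΦV
      (Filter.Eventually.of_forall fun ω => hmin _)
  have h7 : a * ∫ ω, vnorm (V ω) ^ 2 ∂μ ≤ ∫ ω, (x ω ⬝ᵥ V ω) ^ 2 ∂μ := by
    rw [h4, ← h5]; exact h6
  have := mul_le_mul_of_nonneg_left h7 hα
  calc ∫ ω, vnorm (V ω - (α * (x ω ⬝ᵥ V ω)) • x ω) ^ 2 ∂μ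
      ≤ ∫ ω, vnorm (V ω) ^ 2 ∂μ - α * ∫ ω, (x ω ⬝ᵥ V ω) ^ 2 ∂μ := by rw [← step2]; exact step1
    _ ≤ ∫ ω, vnorm (V ω) ^ 2 ∂μ - α * (a * ∫ ω, vnorm (V ω) ^ 2 ∂μ) := by linarith
    _ = (1 - a * α) * ∫ ω, vnorm (V ω) ^ 2 ∂μ := by ring

/-- cross term vanishes -/
lemma crossE {α c CV Ce : ℝ} (hc : 0 ≤ c) (hCV : 0 ≤ CV) (hCe : 0 ≤ Ce)
    {x e : Ω → Fin d → ℝ} (hx : Measurable x) (hxb : ∀ᵐ ω ∂μ, vnorm (x ω) ≤ c)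
    (he : Measurable e) (heb : ∀ᵐ ω ∂μ, vnorm (e ω) ≤ Ce)
    {V : Ω → Fin d → ℝ} (hV : Measurable V) (hVb : ∀ᵐ ω ∂μ, vnorm (V ω) ≤ CV)
    (hVmean : ∀ i, ∫ ω, V ω i ∂μ = 0)
    (hind2 : ∀ (f : (Fin d → ℝ) → ℝ) (g : (Fin d → ℝ) × (Fin d → ℝ) → ℝ),
      Measurable f → Measurable g →
      ∫ ω, f (V ω) * g (x ω, e ω) ∂μ
        = (∫ ω, f (V ω) ∂μ) * ∫ ω, g (x ω, e ω) ∂μ) :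
    ∫ ω, (V ω - (α * (x ω ⬝ᵥ V ω)) • x ω) ⬝ᵥ (α • e ω) ∂μ = 0 := by
  have hVc : ∀ i, ∀ᵐ ω ∂μ, |V ω i| ≤ CV := fun i => by
    filter_upwards [hVb] with ω h using (abs_coord_le _ i).trans h
  have hxc : ∀ i, ∀ᵐ ω ∂μ, |x ω i| ≤ c := fun i => by
    filter_upwards [hxb] with ω h using (abs_coord_le _ i).trans h
  have hec : ∀ i, ∀ᵐ ω ∂μ, |e ω i| ≤ Ce := fun i => by
    filter_upwards [heb] with ω h using (abs_coord_le _ i).trans h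
  have intVe : ∀ i, Integrable (fun ω => V ω i * e ω i) μ := by
    intro i
    apply integrable_of_bdd ((hV.eval).mul (he.eval)) (C := CV * Ce)
    filter_upwards [hVc i, hec i] with ω h1 h2
    simp only [Pi.mul_apply, abs_mul]
    exact mul_le_mul h1 h2 (abs_nonneg _) hCV
  have intVxxe : ∀ i j, Integrable (fun ω => V ω j * (x ω j * (x ω i * e ω i))) μ := by
    intro i j
    apply integrable_of_bdd ((hV.eval).mul ((hx.eval).mul ((hx.eval).mul (he.eval))))
      (C := CV * (c * (c * Ce)))
    filter_upwards [hVc j, hxc j, hxc i, hec i] with ω h1 h2 h3 h4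
    simp only [Pi.mul_apply, abs_mul]
    refine mul_le_mul h1 ?_ (by positivity) hCV
    refine mul_le_mul h2 ?_ (by positivity) hc
    exact mul_le_mul h3 h4 (abs_nonneg _) hc
  have hpt : (fun ω => (V ω - (α * (x ω ⬝ᵥ V ω)) • x ω) ⬝ᵥ (α • e ω))
      = fun ω => ∑ i, (α * (V ω i * e ω i)
        - α ^ 2 * ∑ j, V ω j * (x ω j * (x ω i * e ω i))) := by
    funext ω
    rw [dotProduct]
    refine Finset.sum_congr rfl fun i _ => ?_
    simp only [Pi.sub_apply, Pi.smul_apply, smul_eq_mul, dotProduct]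
    have hs : (∑ j, x ω j * V ω j) * (x ω i * e ω i)
        = ∑ j, V ω j * (x ω j * (x ω i * e ω i)) := by
      rw [Finset.sum_mul]
      exact Finset.sum_congr rfl fun j _ => by ring
    linear_combination (-(α ^ 2)) * hs
  have intTerm : ∀ i, Integrable (fun ω => α * (V ω i * e ω i)
      - α ^ 2 * ∑ j, V ω j * (x ω j * (x ω i * e ω i))) μ := fun i =>
    ((intVe i).const_mul α).sub
      ((integrable_finset_sum _ fun j _ => intVxxe i j).const_mul (α ^ 2))
  rw [hpt, integral_finset_sum _ (fun i _ => intTerm i)]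
  apply Finset.sum_eq_zero
  intro i _
  have t1 : ∫ ω, V ω i * e ω i ∂μ = 0 := by
    have := hind2 (fun v => v i) (fun p => p.2 i) (measurable_pi_apply i)
      (measurable_snd.eval)
    rw [this, hVmean i, zero_mul]
  have t2 : ∀ j, ∫ ω, V ω j * (x ω j * (x ω i * e ω i)) ∂μ = 0 := by
    intro j
    have := hind2 (fun v => v j)
      (fun p => p.1 j * (p.1 i * p.2 i)) (measurable_pi_apply j)
      ((measurable_fst.eval).mul ((measurable_fst.eval).mul (measurable_snd.eval)))
    rw [this, hVmean j, zero_mul]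
  have i1 : Integrable (fun ω => α * (V ω i * e ω i)) μ := (intVe i).const_mul α
  have i2 : Integrable (fun ω => α ^ 2 * ∑ j, V ω j * (x ω j * (x ω i * e ω i))) μ :=
    (integrable_finset_sum _ fun j _ => intVxxe i j).const_mul (α ^ 2)
  rw [integral_sub i1 i2, integral_const_mul, integral_const_mul, t1,
    integral_finset_sum _ (fun j _ => intVxxe i j)]
  rw [Finset.sum_congr rfl fun j _ => t2 j]
  simp

/-- mean-zero propagation -/
lemma meanE {α c CV Ce : ℝ} (hc : 0 ≤ c) (hCV : 0 ≤ CV) (hCe : 0 ≤ Ce)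
    {x e : Ω → Fin d → ℝ} (hx : Measurable x) (hxb : ∀ᵐ ω ∂μ, vnorm (x ω) ≤ c)
    (he : Measurable e) (heb : ∀ᵐ ω ∂μ, vnorm (e ω) ≤ Ce)
    {V : Ω → Fin d → ℝ} (hV : Measurable V) (hVb : ∀ᵐ ω ∂μ, vnorm (V ω) ≤ CV)
    (hVmean : ∀ i, ∫ ω, V ω i ∂μ = 0)
    (hemean : ∀ i, ∫ ω, e ω i ∂μ = 0)
    (hind2 : ∀ (f : (Fin d → ℝ) → ℝ) (g : (Fin d → ℝ) × (Fin d → ℝ) → ℝ),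
      Measurable f → Measurable g →
      ∫ ω, f (V ω) * g (x ω, e ω) ∂μ
        = (∫ ω, f (V ω) ∂μ) * ∫ ω, g (x ω, e ω) ∂μ) :
    ∀ i, ∫ ω, ((V ω - (α * (x ω ⬝ᵥ V ω)) • x ω) - α • e ω) i ∂μ = 0 := by
  intro i
  have hVc : ∀ i, ∀ᵐ ω ∂μ, |V ω i| ≤ CV := fun i => by
    filter_upwards [hVb] with ω h using (abs_coord_le _ i).trans h
  have hxc : ∀ i, ∀ᵐ ω ∂μ, |x ω i| ≤ c := fun i => by
    filter_upwards [hxb] with ω h using (abs_coord_le _ i).trans h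
  have hec : ∀ i, ∀ᵐ ω ∂μ, |e ω i| ≤ Ce := fun i => by
    filter_upwards [heb] with ω h using (abs_coord_le _ i).trans h
  have intV : ∀ i, Integrable (fun ω => V ω i) μ := fun i =>
    integrable_of_bdd (hV.eval) (hVc i)
  have inte : ∀ i, Integrable (fun ω => e ω i) μ := fun i =>
    integrable_of_bdd (he.eval) (hec i)
  have intVxx : ∀ j, Integrable (fun ω => V ω j * (x ω j * x ω i)) μ := by
    intro j
    apply integrable_of_bdd ((hV.eval).mul ((hx.eval).mul (hx.eval))) (C := CV * (c * c))
    filter_upwards [hVc j, hxc j, hxc i] with ω h1 h2 h3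
    simp only [Pi.mul_apply, abs_mul]
    exact mul_le_mul h1 (mul_le_mul h2 h3 (abs_nonneg _) hc) (by positivity) hCV
  have hpt : (fun ω => ((V ω - (α * (x ω ⬝ᵥ V ω)) • x ω) - α • e ω) i)
      = fun ω => V ω i - α * ∑ j, V ω j * (x ω j * x ω i) - α * e ω i := by
    funext ω
    simp only [Pi.sub_apply, Pi.smul_apply, smul_eq_mul, dotProduct]
    have hs : (∑ j, x ω j * V ω j) * x ω i = ∑ j, V ω j * (x ω j * x ω i) := by
      rw [Finset.sum_mul]
      exact Finset.sum_congr rfl fun j _ => by ring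
    linear_combination (-α) * hs
  have i2 : Integrable (fun ω => α * ∑ j, V ω j * (x ω j * x ω i)) μ :=
    (integrable_finset_sum _ fun j _ => intVxx j).const_mul α
  have i12 : Integrable (fun ω => V ω i - α * ∑ j, V ω j * (x ω j * x ω i)) μ :=
    (intV i).sub i2
  rw [hpt, integral_sub i12 ((inte i).const_mul α), integral_sub (intV i) i2,
    integral_const_mul, integral_const_mul, hVmean i, hemean i,
    integral_finset_sum _ (fun j _ => intVxx j)]
  have t2 : ∀ j, ∫ ω, V ω j * (x ω j * x ω i) ∂μ = 0 := by
    intro j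
    have := hind2 (fun v => v j) (fun p => p.1 j * p.1 i) (measurable_pi_apply j)
      ((measurable_fst.eval).mul (measurable_fst.eval))
    rw [this, hVmean j, zero_mul]
  rw [Finset.sum_congr rfl fun j _ => t2 j]
  simp

end Main
end SGD13

/-- For the SGD recursion
`θ_k − θ* = (I − αX_kX_kᵀ)(θ_{k−1} − θ*) − αε_k` with i.i.d. data `(X_k, ε_k)`,
bounded features and bounded centered noise, it holds that
`E[‖θ_k − θ*‖²]^{1/2} ≤ exp(−aαk/2)‖θ₀ − θ*‖ + ‖ε‖_∞ √(α/a)`. -/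
theorem stmt_13 {d : ℕ} (c a α Ceps : ℝ) (hc : 0 < c) (ha : 0 < a) (hCeps : 0 ≤ Ceps)
    (hα : 0 < α) (hα' : α ≤ 1 / c ^ 2)
    (Φ : Matrix (Fin d) (Fin d) ℝ) (hΦpd : Φ.PosDef)
    (hmin : ∀ u : Fin d → ℝ, a * vnorm u ^ 2 ≤ u ⬝ᵥ Φ.mulVec u)
    {Ω : Type*} [MeasurableSpace Ω] (μ : Measure Ω) [IsProbabilityMeasure μ]
    (X : ℕ → Ω → Fin d → ℝ) (ε : ℕ → Ω → Fin d → ℝ)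
    (hXmeas : ∀ k, Measurable (X k)) (hεmeas : ∀ k, Measurable (ε k))
    (hindep : iIndepFun (fun k ω => (X k ω, ε k ω)) μ)
    (hident : ∀ k, IdentDistrib (fun ω => (X k ω, ε k ω)) (fun ω => (X 1 ω, ε 1 ω)) μ μ)
    (hXbdd : ∀ k, ∀ᵐ ω ∂μ, vnorm (X k ω) ≤ c)
    (hXΦ : ∀ i j, ∫ ω, X 1 ω i * X 1 ω j ∂μ = Φ i j)
    (hεbdd : ∀ k, ∀ᵐ ω ∂μ, vnorm (ε k ω) ≤ Ceps)
    (hεcentered : ∀ k i, ∫ ω, ε k ω i ∂μ = 0)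
    (θstar θ0 : Fin d → ℝ)
    (θ : ℕ → Ω → Fin d → ℝ)
    (hθ0 : ∀ ω, θ 0 ω = θ0)
    (hrec : ∀ k ω,
      θ (k + 1) ω - θstar
        = ((1 : Matrix (Fin d) (Fin d) ℝ)
            - α • vecMulVec (X (k + 1) ω) (X (k + 1) ω)).mulVec (θ k ω - θstar)
          - α • ε (k + 1) ω) :
    ∀ k : ℕ,
      Real.sqrt (∫ ω, vnorm (θ k ω - θstar) ^ 2 ∂μ)
        ≤ Real.exp (-(a * α * k) / 2) * vnorm (θ0 - θstar)
          + Ceps * Real.sqrt (α / a) := by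
  classical
  -- trivial case d = 0
  rcases Nat.eq_zero_or_pos d with hd0 | hd0
  · subst hd0
    intro k
    have hv : ∀ v : Fin 0 → ℝ, vnorm v = 0 := by
      intro v; rw [vnorm]; simp
    simp only [hv]
    simp only [ne_eq, OfNat.ofNat_ne_zero, not_false_eq_true, zero_pow, integral_zero,
      Real.sqrt_zero, mul_zero, zero_add]
    positivity
  -- main case
  have hc2 : (0:ℝ) < c ^ 2 := by positivity
  have hαc : α * c ^ 2 ≤ 1 := by
    rw [div_eq_mul_inv, one_mul] at hα'
    calc α * c ^ 2 ≤ (c ^ 2)⁻¹ * c ^ 2 := by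
          exact mul_le_mul_of_nonneg_right hα' (le_of_lt hc2)
      _ = 1 := inv_mul_cancel₀ (ne_of_gt hc2)
  have hα0 : (0:ℝ) ≤ α := le_of_lt hα
  set v0 : Fin d → ℝ := θ0 - θstar with hv0def
  set Z : ℕ → Ω → (Fin d → ℝ) × (Fin d → ℝ) := fun k ω => (X k ω, ε k ω) with hZdef
  have hZmeas : ∀ k, Measurable (Z k) := fun k => (hXmeas k).prodMk (hεmeas k)
  set D : ℕ → Ω → Fin d → ℝ := fun k ω => SGD13.sgdD α v0 (fun i => X i ω) k with hDdef
  set N : ℕ → Ω → Fin d → ℝ := fun k ω => SGD13.sgdN α (fun i => Z i ω) k with hNdef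
  have hDmeas : ∀ k, Measurable (D k) := fun k =>
    (SGD13.measurable_sgdD k).comp (measurable_pi_lambda _ fun i => hXmeas i)
  have hNmeas : ∀ k, Measurable (N k) := fun k =>
    (SGD13.measurable_sgdN k).comp (measurable_pi_lambda _ fun i => hZmeas i)
  have hDrec : ∀ k ω, D (k+1) ω
      = D k ω - (α * (X (k+1) ω ⬝ᵥ D k ω)) • X (k+1) ω := by
    intro k ω; simp only [hDdef, SGD13.sgdD]
  have hNrec : ∀ k ω, N (k+1) ω
      = (N k ω - (α * (X (k+1) ω ⬝ᵥ N k ω)) • X (k+1) ω) - α • ε (k+1) ω := by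
    intro k ω; simp only [hNdef, SGD13.sgdN, hZdef]
  have hD0 : ∀ ω, D 0 ω = v0 := fun ω => rfl
  have hN0 : ∀ ω, N 0 ω = 0 := fun ω => rfl
  -- decomposition θ_k - θ* = D_k + N_k
  have hsum : ∀ k ω, θ k ω - θstar = D k ω + N k ω := by
    intro k
    induction k with
    | zero => intro ω; rw [hθ0 ω, hD0, hN0, add_zero]
    | succ k ih =>
      intro ω
      rw [hrec k ω, SGD13.mulVec_sub_form, ih ω, hDrec, hNrec]
      funext i
      simp only [Pi.add_apply, Pi.sub_apply, Pi.smul_apply, smul_eq_mul, dotProduct_add]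
      ring
  -- a.s. bounds
  have hDbd : ∀ k, ∀ᵐ ω ∂μ, vnorm (D k ω) ≤ vnorm v0 := by
    intro k
    induction k with
    | zero => exact Filter.Eventually.of_forall fun ω => by rw [hD0]
    | succ k ih =>
      filter_upwards [hXbdd (k+1), ih] with ω h1 h2
      rw [hDrec]
      exact (SGD13.contract_le h1 hα0 hαc).trans h2
  have hNbd : ∀ k, ∀ᵐ ω ∂μ, vnorm (N k ω) ≤ (k : ℝ) * (α * Ceps) := by
    intro k
    induction k with
    | zero =>
      refine Filter.Eventually.of_forall fun ω => ?_
      rw [hN0]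
      simp [vnorm]
    | succ k ih =>
      filter_upwards [hXbdd (k+1), hεbdd (k+1), ih] with ω h1 h2 h3
      rw [hNrec]
      calc vnorm ((N k ω - (α * (X (k+1) ω ⬝ᵥ N k ω)) • X (k+1) ω) - α • ε (k+1) ω)
          ≤ vnorm (N k ω - (α * (X (k+1) ω ⬝ᵥ N k ω)) • X (k+1) ω)
            + vnorm (α • ε (k+1) ω) := SGD13.vnorm_sub_le _ _
        _ ≤ vnorm (N k ω) + |α| * vnorm (ε (k+1) ω) := by
            rw [SGD13.vnorm_smul]
            exact add_le_add (SGD13.contract_le h1 hα0 hαc) le_rfl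
        _ ≤ (k : ℝ) * (α * Ceps) + α * Ceps := by
            rw [abs_of_nonneg hα0]
            exact add_le_add h3 (mul_le_mul_of_nonneg_left h2 hα0)
        _ = ((k : ℝ) + 1) * (α * Ceps) := by ring
        _ = ((k + 1 : ℕ) : ℝ) * (α * Ceps) := by push_cast; ring
  -- independence of (D k, N k) from Z (k+1)
  have hindepDN : ∀ k, IndepFun (fun ω => (D k ω, N k ω)) (Z (k+1)) μ := by
    intro k
    set S : Finset ℕ := Finset.range (k+1) with hS
    have hdisj : Disjoint S ({k+1} : Finset ℕ) := by
      simp only [hS, Finset.disjoint_left, Finset.mem_range, Finset.mem_singleton]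
      omega
    have base := hindep.indepFun_finset S {k+1} hdisj hZmeas
    set ext : ((i : S) → (Fin d → ℝ) × (Fin d → ℝ)) → ℕ → (Fin d → ℝ) × (Fin d → ℝ) :=
      fun y n => if h : n ∈ S then y ⟨n, h⟩ else 0 with hext
    have hextm : Measurable ext := by
      apply measurable_pi_lambda
      intro n
      by_cases h : n ∈ S
      · simpa [hext, h] using (measurable_pi_apply (⟨n, h⟩ : S))
      · simpa [hext, h] using
          (measurable_const (a := ((0,0) : (Fin d → ℝ) × (Fin d → ℝ))))
    set φ : ((i : S) → (Fin d → ℝ) × (Fin d → ℝ)) → (Fin d → ℝ) × (Fin d → ℝ) :=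
      fun y => (SGD13.sgdD α v0 (fun n => (ext y n).1) k, SGD13.sgdN α (ext y) k) with hφ
    have hφm : Measurable φ := by
      apply Measurable.prod
      · exact (SGD13.measurable_sgdD k).comp
          (measurable_pi_lambda _ fun n => ((hextm.eval (a := n)).fst))
      · exact (SGD13.measurable_sgdN k).comp hextm
    set ψ : ((i : ({k+1} : Finset ℕ)) → (Fin d → ℝ) × (Fin d → ℝ)) →
        (Fin d → ℝ) × (Fin d → ℝ) :=
      fun y => y ⟨k+1, Finset.mem_singleton_self _⟩ with hψ
    have hψm : Measurable ψ := measurable_pi_apply _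
    have hcomp := base.comp hφm hψm
    have e1 : (φ ∘ fun ω (i : S) => Z i ω) = fun ω => (D k ω, N k ω) := by
      funext ω
      have hagree : ∀ i, 1 ≤ i → i ≤ k → ext (fun j : S => Z j ω) i = Z i ω := by
        intro i h1 h2
        have hmem : i ∈ S := by
          simp only [hS, Finset.mem_range]; omega
        simp [hext, hmem]
      have c1 : SGD13.sgdD α v0 (fun n => (ext (fun j : S => Z j ω) n).1) k
          = SGD13.sgdD α v0 (fun n => X n ω) k :=
        SGD13.sgdD_congr k (fun i h1 h2 => by rw [hagree i h1 h2])
      have c2 : SGD13.sgdN α (ext (fun j : S => Z j ω)) k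
          = SGD13.sgdN α (fun n => Z n ω) k :=
        SGD13.sgdN_congr k (fun i h1 h2 => hagree i h1 h2)
      show φ (fun j : S => Z j ω) = (D k ω, N k ω)
      rw [hφ]
      simp only
      rw [c1, c2]
    have e2 : (ψ ∘ fun ω (i : ({k+1} : Finset ℕ)) => Z i ω) = Z (k+1) := rfl
    rw [e1, e2] at hcomp
    exact hcomp
  -- factorization over the past
  have hfactN : ∀ k (f : (Fin d → ℝ) → ℝ) (g : (Fin d → ℝ) × (Fin d → ℝ) → ℝ),
      Measurable f → Measurable g →
      ∫ ω, f (N k ω) * g (X (k+1) ω, ε (k+1) ω) ∂μ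
        = (∫ ω, f (N k ω) ∂μ) * ∫ ω, g (X (k+1) ω, ε (k+1) ω) ∂μ := by
    intro k f g hf hg
    have h := ((hindepDN k).comp (hf.comp measurable_snd) hg).integral_fun_mul_eq_mul_integral
      ((hf.comp ((hNmeas k))).aestronglyMeasurable)
      ((hg.comp (hZmeas (k+1))).aestronglyMeasurable)
    simpa [Function.comp, hZdef] using h
  have hfactD : ∀ k (f : (Fin d → ℝ) → ℝ) (g : (Fin d → ℝ) → ℝ),
      Measurable f → Measurable g →
      ∫ ω, f (D k ω) * g (X (k+1) ω) ∂μ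
        = (∫ ω, f (D k ω) ∂μ) * ∫ ω, g (X (k+1) ω) ∂μ := by
    intro k f g hf hg
    have h := ((hindepDN k).comp (hf.comp measurable_fst)
      (hg.comp measurable_fst)).integral_fun_mul_eq_mul_integral
      ((hf.comp ((hDmeas k))).aestronglyMeasurable)
      ((hg.comp ((hXmeas (k+1)))).aestronglyMeasurable)
    simpa [Function.comp, hZdef] using h
  -- moments of X
  have hXmom : ∀ k i j, ∫ ω, X (k+1) ω i * X (k+1) ω j ∂μ = Φ i j := by
    intro k i j
    have hm : Measurable fun p : (Fin d → ℝ) × (Fin d → ℝ) => p.1 i * p.1 j :=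
      (measurable_fst.eval).mul (measurable_fst.eval)
    have h := ((hident (k+1)).comp hm).integral_eq
    simpa using h.trans (by simpa using hXΦ i j)
  -- a ≤ c^2 hence a*α ≤ 1
  have haα : 1 - a * α ≥ 0 := by
    set i0 : Fin d := ⟨0, hd0⟩ with hi0
    set u : Fin d → ℝ := fun j => if j = i0 then 1 else 0 with hu
    have hnu : vnorm u ^ 2 = 1 := by
      rw [SGD13.vnorm_sq, hu]
      simp [dotProduct, ite_mul, mul_ite]
    have h1 : a ≤ u ⬝ᵥ Φ.mulVec u := by
      have := hmin u; rw [hnu] at this; simpa using this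
    have h2 : u ⬝ᵥ Φ.mulVec u = Φ i0 i0 := by
      simp [hu, dotProduct, Matrix.mulVec, ite_mul, mul_ite]
    have hbd : ∀ᵐ ω ∂μ, X 1 ω i0 * X 1 ω i0 ≤ c ^ 2 := by
      filter_upwards [hXbdd 1] with ω h
      have h3 := (SGD13.abs_coord_le (X 1 ω) i0).trans h
      nlinarith [abs_nonneg (X 1 ω i0), le_abs_self (X 1 ω i0), neg_abs_le (X 1 ω i0)]
    have hint : Integrable (fun ω => X 1 ω i0 * X 1 ω i0) μ := by
      apply SGD13.integrable_of_bdd (((hXmeas 1).eval).mul ((hXmeas 1).eval)) (C := c * c)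
      filter_upwards [hXbdd 1] with ω h
      have h3 := (SGD13.abs_coord_le (X 1 ω) i0).trans h
      simp only [Pi.mul_apply, abs_mul]
      exact mul_le_mul h3 h3 (abs_nonneg _) (le_of_lt hc)
    have h4 : Φ i0 i0 ≤ c ^ 2 := by
      rw [← hXΦ i0 i0]
      exact (integral_mono_ae hint (integrable_const _) hbd).trans (by simp)
    have h5 : a ≤ c ^ 2 := h1.trans (h2 ▸ h4)
    have h6 : a * α ≤ c ^ 2 * α := mul_le_mul_of_nonneg_right h5 hα0
    nlinarith

  -- mean zero of N
  have hNmean : ∀ k i, ∫ ω, N k ω i ∂μ = 0 := by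
    intro k
    induction k with
    | zero =>
      intro i
      simp only [hN0, Pi.zero_apply, integral_zero]
    | succ k ih =>
      intro i
      have key := SGD13.meanE (μ := μ) (α := α) (c := c)
        (CV := (k : ℝ) * (α * Ceps)) (Ce := Ceps)
        (le_of_lt hc) (by positivity) hCeps
        (hXmeas (k+1)) (hXbdd (k+1)) (hεmeas (k+1)) (hεbdd (k+1))
        (hNmeas k) (hNbd k) ih (hεcentered (k+1)) (hfactN k) i
      calc ∫ ω, N (k+1) ω i ∂μ
          = ∫ ω, ((N k ω - (α * (X (k+1) ω ⬝ᵥ N k ω)) • X (k+1) ω)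
              - α • ε (k+1) ω) i ∂μ := by
            apply integral_congr_ae
            exact Filter.Eventually.of_forall fun ω => by simp only [hNrec k ω]
        _ = 0 := key
  -- contraction bounds
  have hdI : ∀ k, ∫ ω, vnorm (D k ω) ^ 2 ∂μ ≤ (1 - a * α) ^ k * vnorm v0 ^ 2 := by
    intro k
    induction k with
    | zero =>
      simp only [hD0, pow_zero, one_mul]
      rw [integral_const]
      simp
    | succ k ih =>
      have hcon := SGD13.contractE (μ := μ) (a := a) (α := α) (c := c)
        (CV := vnorm v0) hα0 hαc (le_of_lt hc) (SGD13.vnorm_nonneg v0) Φ hmin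
        (hXmeas (k+1)) (hXbdd (k+1)) (hXmom k) (hDmeas k) (hDbd k) (hfactD k)
      calc ∫ ω, vnorm (D (k+1) ω) ^ 2 ∂μ
          = ∫ ω, vnorm (D k ω - (α * (X (k+1) ω ⬝ᵥ D k ω)) • X (k+1) ω) ^ 2 ∂μ := by
            apply integral_congr_ae
            exact Filter.Eventually.of_forall fun ω => by simp only [hDrec k ω]
        _ ≤ (1 - a * α) * ∫ ω, vnorm (D k ω) ^ 2 ∂μ := hcon
        _ ≤ (1 - a * α) * ((1 - a * α) ^ k * vnorm v0 ^ 2) :=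
            mul_le_mul_of_nonneg_left ih haα
        _ = (1 - a * α) ^ (k+1) * vnorm v0 ^ 2 := by ring
  have hnI : ∀ k, ∫ ω, vnorm (N k ω) ^ 2 ∂μ ≤ Ceps ^ 2 * (α / a) := by
    intro k
    induction k with
    | zero =>
      simp only [hN0]
      have h0 : vnorm (0 : Fin d → ℝ) = 0 := by simp [vnorm]
      rw [h0]
      simp only [ne_eq, OfNat.ofNat_ne_zero, not_false_eq_true, zero_pow, integral_zero]
      positivity
    | succ k ih =>
      set A : Ω → Fin d → ℝ :=
        fun ω => N k ω - (α * (X (k+1) ω ⬝ᵥ N k ω)) • X (k+1) ω with hA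
      set B : Ω → Fin d → ℝ := fun ω => α • ε (k+1) ω with hB
      have hAm : Measurable A := SGD13.measurable_step (hNmeas k) (hXmeas (k+1))
      have hBm : Measurable B := (hεmeas (k+1)).const_smul α
      have hAb : ∀ᵐ ω ∂μ, vnorm (A ω) ≤ (k : ℝ) * (α * Ceps) := by
        filter_upwards [hXbdd (k+1), hNbd k] with ω h1 h2
        exact (SGD13.contract_le h1 hα0 hαc).trans h2
      have hBb : ∀ᵐ ω ∂μ, vnorm (B ω) ≤ α * Ceps := by
        filter_upwards [hεbdd (k+1)] with ω h
        rw [hB]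
        simp only
        rw [SGD13.vnorm_smul, abs_of_nonneg hα0]
        exact mul_le_mul_of_nonneg_left h hα0
      have intA2 : Integrable (fun ω => vnorm (A ω) ^ 2) μ := by
        apply SGD13.integrable_of_bdd ((SGD13.measurable_vnorm hAm).pow_const 2)
          (C := ((k : ℝ) * (α * Ceps)) ^ 2)
        filter_upwards [hAb] with ω h
        rw [abs_of_nonneg (by positivity)]
        exact pow_le_pow_left₀ (SGD13.vnorm_nonneg _) h 2
      have intB2 : Integrable (fun ω => vnorm (B ω) ^ 2) μ := by
        apply SGD13.integrable_of_bdd ((SGD13.measurable_vnorm hBm).pow_const 2)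
          (C := (α * Ceps) ^ 2)
        filter_upwards [hBb] with ω h
        rw [abs_of_nonneg (by positivity)]
        exact pow_le_pow_left₀ (SGD13.vnorm_nonneg _) h 2
      have intAB : Integrable (fun ω => A ω ⬝ᵥ B ω) μ := by
        apply SGD13.integrable_of_bdd (SGD13.measurable_dot hAm hBm)
          (C := ((k : ℝ) * (α * Ceps)) * (α * Ceps))
        filter_upwards [hAb, hBb] with ω h1 h2
        exact (SGD13.abs_dot_le _ _).trans
          (mul_le_mul h1 h2 (SGD13.vnorm_nonneg _) (by positivity))
      -- expansion of the square
      have hsplit : ∫ ω, vnorm (N (k+1) ω) ^ 2 ∂μ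
          = ∫ ω, vnorm (A ω) ^ 2 ∂μ - 2 * ∫ ω, A ω ⬝ᵥ B ω ∂μ
            + ∫ ω, vnorm (B ω) ^ 2 ∂μ := by
        have hptw : ∀ ω, vnorm (N (k+1) ω) ^ 2
            = vnorm (A ω) ^ 2 - 2 * (A ω ⬝ᵥ B ω) + vnorm (B ω) ^ 2 := by
          intro ω
          rw [hNrec k ω]
          exact SGD13.vnorm_sub_sq _ _
        have i1 : Integrable (fun ω => 2 * (A ω ⬝ᵥ B ω)) μ := intAB.const_mul 2
        have i12 : Integrable (fun ω => vnorm (A ω) ^ 2 - 2 * (A ω ⬝ᵥ B ω)) μ :=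
          intA2.sub i1
        calc ∫ ω, vnorm (N (k+1) ω) ^ 2 ∂μ
            = ∫ ω, (vnorm (A ω) ^ 2 - 2 * (A ω ⬝ᵥ B ω) + vnorm (B ω) ^ 2) ∂μ := by
              apply integral_congr_ae
              exact Filter.Eventually.of_forall fun ω => hptw ω
          _ = ∫ ω, vnorm (A ω) ^ 2 ∂μ - 2 * ∫ ω, A ω ⬝ᵥ B ω ∂μ
              + ∫ ω, vnorm (B ω) ^ 2 ∂μ := by
              rw [integral_add i12 intB2, integral_sub intA2 i1, integral_const_mul]
      -- contraction term
      have hcon := SGD13.contractE (μ := μ) (a := a) (α := α) (c := c)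
        (CV := (k : ℝ) * (α * Ceps)) hα0 hαc (le_of_lt hc) (by positivity) Φ hmin
        (hXmeas (k+1)) (hXbdd (k+1)) (hXmom k) (hNmeas k) (hNbd k)
        (fun f g hf hg => by
          simpa using hfactN k f (fun p => g p.1) hf (hg.comp measurable_fst))
      -- cross term
      have hcross : ∫ ω, A ω ⬝ᵥ B ω ∂μ = 0 :=
        SGD13.crossE (μ := μ) (α := α) (c := c)
          (CV := (k : ℝ) * (α * Ceps)) (Ce := Ceps)
          (le_of_lt hc) (by positivity) hCeps
          (hXmeas (k+1)) (hXbdd (k+1)) (hεmeas (k+1)) (hεbdd (k+1))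
          (hNmeas k) (hNbd k) (hNmean k) (hfactN k)
      -- noise term
      have hnoise : ∫ ω, vnorm (B ω) ^ 2 ∂μ ≤ α ^ 2 * Ceps ^ 2 := by
        have hb2 : ∀ᵐ ω ∂μ, vnorm (B ω) ^ 2 ≤ α ^ 2 * Ceps ^ 2 := by
          filter_upwards [hBb] with ω h
          have := pow_le_pow_left₀ (SGD13.vnorm_nonneg _) h 2
          calc vnorm (B ω) ^ 2 ≤ (α * Ceps) ^ 2 := this
            _ = α ^ 2 * Ceps ^ 2 := by ring
        exact (integral_mono_ae intB2 (integrable_const _) hb2).trans (by simp)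
      have hfinal : (1 - a * α) * (Ceps ^ 2 * (α / a)) + α ^ 2 * Ceps ^ 2
          = Ceps ^ 2 * (α / a) := by
        field_simp
        ring
      calc ∫ ω, vnorm (N (k+1) ω) ^ 2 ∂μ
          = ∫ ω, vnorm (A ω) ^ 2 ∂μ - 2 * ∫ ω, A ω ⬝ᵥ B ω ∂μ
            + ∫ ω, vnorm (B ω) ^ 2 ∂μ := hsplit
        _ = ∫ ω, vnorm (A ω) ^ 2 ∂μ + ∫ ω, vnorm (B ω) ^ 2 ∂μ := by
            rw [hcross]; ring
        _ ≤ (1 - a * α) * ∫ ω, vnorm (N k ω) ^ 2 ∂μ + α ^ 2 * Ceps ^ 2 :=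
            add_le_add hcon hnoise
        _ ≤ (1 - a * α) * (Ceps ^ 2 * (α / a)) + α ^ 2 * Ceps ^ 2 :=
            add_le_add (mul_le_mul_of_nonneg_left ih haα) le_rfl
        _ = Ceps ^ 2 * (α / a) := hfinal
  -- final assembly
  intro k
  set dI := ∫ ω, vnorm (D k ω) ^ 2 ∂μ with hdIdef
  set nI := ∫ ω, vnorm (N k ω) ^ 2 ∂μ with hnIdef
  have hdI0 : 0 ≤ dI := integral_nonneg fun ω => sq_nonneg _
  have hnI0 : 0 ≤ nI := integral_nonneg fun ω => sq_nonneg _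
  have intD2 : Integrable (fun ω => vnorm (D k ω) ^ 2) μ := by
    apply SGD13.integrable_of_bdd ((SGD13.measurable_vnorm (hDmeas k)).pow_const 2)
      (C := vnorm v0 ^ 2)
    filter_upwards [hDbd k] with ω h
    rw [abs_of_nonneg (by positivity)]
    exact pow_le_pow_left₀ (SGD13.vnorm_nonneg _) h 2
  have intN2 : Integrable (fun ω => vnorm (N k ω) ^ 2) μ := by
    apply SGD13.integrable_of_bdd ((SGD13.measurable_vnorm (hNmeas k)).pow_const 2)
      (C := ((k : ℝ) * (α * Ceps)) ^ 2)
    filter_upwards [hNbd k] with ω h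
    rw [abs_of_nonneg (by positivity)]
    exact pow_le_pow_left₀ (SGD13.vnorm_nonneg _) h 2
  have intDN : Integrable (fun ω => vnorm (D k ω) * vnorm (N k ω)) μ := by
    apply SGD13.integrable_of_bdd
      ((SGD13.measurable_vnorm (hDmeas k)).mul (SGD13.measurable_vnorm (hNmeas k)))
      (C := vnorm v0 * ((k : ℝ) * (α * Ceps)))
    filter_upwards [hDbd k, hNbd k] with ω h1 h2
    rw [Pi.mul_apply, abs_of_nonneg (mul_nonneg (SGD13.vnorm_nonneg _) (SGD13.vnorm_nonneg _))]
    exact mul_le_mul h1 h2 (SGD13.vnorm_nonneg _) (SGD13.vnorm_nonneg _)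
  have hrw : ∫ ω, vnorm (θ k ω - θstar) ^ 2 ∂μ = ∫ ω, vnorm (D k ω + N k ω) ^ 2 ∂μ :=
    integral_congr_ae (Filter.Eventually.of_forall fun ω => by simp only [hsum k ω])
  have hCS : ∫ ω, vnorm (D k ω) * vnorm (N k ω) ∂μ ≤ Real.sqrt dI * Real.sqrt nI :=
    SGD13.integral_CS intD2 intN2 intDN
  have hup : ∫ ω, vnorm (D k ω + N k ω) ^ 2 ∂μ
      ≤ (Real.sqrt dI + Real.sqrt nI) ^ 2 := by
    have hptw : ∀ ω, vnorm (D k ω + N k ω) ^ 2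
        ≤ vnorm (D k ω) ^ 2 + 2 * (vnorm (D k ω) * vnorm (N k ω))
          + vnorm (N k ω) ^ 2 := by
      intro ω
      have h := SGD13.vnorm_add_le (D k ω) (N k ω)
      nlinarith [SGD13.vnorm_nonneg (D k ω + N k ω), SGD13.vnorm_nonneg (D k ω),
        SGD13.vnorm_nonneg (N k ω)]
    have i2 : Integrable (fun ω => 2 * (vnorm (D k ω) * vnorm (N k ω))) μ :=
      intDN.const_mul 2
    have i12 : Integrable (fun ω => vnorm (D k ω) ^ 2
        + 2 * (vnorm (D k ω) * vnorm (N k ω))) μ := intD2.add i2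
    have intSum : Integrable (fun ω => vnorm (D k ω) ^ 2
        + 2 * (vnorm (D k ω) * vnorm (N k ω)) + vnorm (N k ω) ^ 2) μ := i12.add intN2
    have intLHS : Integrable (fun ω => vnorm (D k ω + N k ω) ^ 2) μ := by
      apply SGD13.integrable_of_bdd
        ((SGD13.measurable_vnorm ((hDmeas k).add (hNmeas k))).pow_const 2)
        (C := (vnorm v0 + (k : ℝ) * (α * Ceps)) ^ 2)
      filter_upwards [hDbd k, hNbd k] with ω h1 h2
      rw [abs_of_nonneg (by positivity)]
      refine pow_le_pow_left₀ (SGD13.vnorm_nonneg _) ?_ 2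
      exact (SGD13.vnorm_add_le _ _).trans (add_le_add h1 h2)
    have h1 : ∫ ω, vnorm (D k ω + N k ω) ^ 2 ∂μ
        ≤ ∫ ω, (vnorm (D k ω) ^ 2 + 2 * (vnorm (D k ω) * vnorm (N k ω))
          + vnorm (N k ω) ^ 2) ∂μ :=
      integral_mono_ae intLHS intSum (Filter.Eventually.of_forall hptw)
    have h2 : ∫ ω, (vnorm (D k ω) ^ 2 + 2 * (vnorm (D k ω) * vnorm (N k ω))
        + vnorm (N k ω) ^ 2) ∂μ
        = dI + 2 * ∫ ω, vnorm (D k ω) * vnorm (N k ω) ∂μ + nI := by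
      rw [integral_add i12 intN2, integral_add intD2 i2, integral_const_mul]
    have h3 : dI + 2 * ∫ ω, vnorm (D k ω) * vnorm (N k ω) ∂μ + nI
        ≤ dI + 2 * (Real.sqrt dI * Real.sqrt nI) + nI := by linarith
    have h4 : dI + 2 * (Real.sqrt dI * Real.sqrt nI) + nI
        = (Real.sqrt dI + Real.sqrt nI) ^ 2 := by
      rw [add_sq, Real.sq_sqrt hdI0, Real.sq_sqrt hnI0]
      ring
    linarith
  have hsqrt : Real.sqrt (∫ ω, vnorm (θ k ω - θstar) ^ 2 ∂μ)
      ≤ Real.sqrt dI + Real.sqrt nI := by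
    rw [hrw]
    calc Real.sqrt (∫ ω, vnorm (D k ω + N k ω) ^ 2 ∂μ)
        ≤ Real.sqrt ((Real.sqrt dI + Real.sqrt nI) ^ 2) := Real.sqrt_le_sqrt hup
      _ = Real.sqrt dI + Real.sqrt nI := Real.sqrt_sq (by positivity)
  have hbd1 : Real.sqrt dI ≤ Real.exp (-(a * α * k) / 2) * vnorm v0 := by
    have hexp0 : 1 - a * α ≤ Real.exp (-(a * α)) := by
      have := Real.add_one_le_exp (-(a * α))
      linarith
    have hexp1 : (1 - a * α) ^ k ≤ Real.exp (-(a * α * k)) := by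
      calc (1 - a * α) ^ k ≤ Real.exp (-(a * α)) ^ k := pow_le_pow_left₀ haα hexp0 k
        _ = Real.exp ((k : ℝ) * (-(a * α))) := (Real.exp_nat_mul _ k).symm
        _ = Real.exp (-(a * α * k)) := by congr 1; ring
    have hd2 : dI ≤ Real.exp (-(a * α * k)) * vnorm v0 ^ 2 :=
      (hdI k).trans (mul_le_mul_of_nonneg_right hexp1 (sq_nonneg _))
    calc Real.sqrt dI ≤ Real.sqrt (Real.exp (-(a * α * k)) * vnorm v0 ^ 2) :=
          Real.sqrt_le_sqrt hd2
      _ = Real.sqrt (Real.exp (-(a * α * k))) * vnorm v0 := by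
          rw [Real.sqrt_mul (Real.exp_nonneg _), Real.sqrt_sq (SGD13.vnorm_nonneg _)]
      _ = Real.exp (-(a * α * k) / 2) * vnorm v0 := by
          congr 1
          conv_lhs => rw [show -(a * α * (k : ℝ)) = -(a * α * (k : ℝ)) / 2
            + -(a * α * (k : ℝ)) / 2 by ring, Real.exp_add]
          exact Real.sqrt_mul_self (Real.exp_nonneg _)
  have hbd2 : Real.sqrt nI ≤ Ceps * Real.sqrt (α / a) := by
    calc Real.sqrt nI ≤ Real.sqrt (Ceps ^ 2 * (α / a)) := Real.sqrt_le_sqrt (hnI k)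
      _ = Ceps * Real.sqrt (α / a) := by
          rw [Real.sqrt_mul (sq_nonneg _), Real.sqrt_sq hCeps]
  exact hsqrt.trans (add_le_add hbd1 hbd2)
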